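/- Comparison of Hamiltonians on the good event: for every even n, every ω ∈ Ω̄_n, and every configuration σ ∈ X_n, the difference Δ_n(σ) = H_n(σ) − H̄_n(σ) between the random Hamiltonian and the bipartite Curie–Weiss Hamiltonian satisfies |Δ_n(σ)| ≤ (3/2) n ρ_n. -/

import Mathlib

open MeasureTheory ProbabilityTheory Finset Filter

noncomputable section

/-- Spin value associated with a Boolean. -/
def spin (b : Bool) : ℝ := if b then 1 else -1

/-- The pair of community magnetizations `(m₁, m₂)` of a configuration. -/
def mag (n : ℕ) (σ : Fin n → Bool) : ℝ × ℝ :=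
  ((2 / (n : ℝ)) * ∑ j : Fin n, (if (j : ℕ) < n / 2 then spin (σ j) else 0),
   (2 / (n : ℝ)) * ∑ j : Fin n, (if n / 2 ≤ (j : ℕ) then spin (σ j) else 0))

/-- Internal (intra-community) edge: `i < j` and both in the same community. -/
def innerEdge (n i j : ℕ) : Prop := i < j ∧ j < n ∧ (j < n / 2 ∨ n / 2 ≤ i)

/-- External (inter-community) edge. -/
def outerEdge (n i j : ℕ) : Prop := i < n / 2 ∧ n / 2 ≤ j ∧ j < n

instance (n i j : ℕ) : Decidable (innerEdge n i j) := by unfold innerEdge; infer_instance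
instance (n i j : ℕ) : Decidable (outerEdge n i j) := by unfold outerEdge; infer_instance

/-- The random Hamiltonian of the Ising model on the 2-community SBM. -/
def Hrand {Ω : Type*} (p : ℕ → ℝ) (ξ ζ : ℕ → ℕ × ℕ → Ω → ℝ)
    (n : ℕ) (σ : Fin n → Bool) (ω : Ω) : ℝ :=
  -(1 / ((n : ℝ) * p n)) *
    ((∑ i : Fin n, ∑ j : Fin n,
        if innerEdge n i j then ξ n ((i : ℕ), (j : ℕ)) ω * spin (σ i) * spin (σ j) else 0) +
     (∑ i : Fin n, ∑ j : Fin n,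
        if outerEdge n i j then ζ n ((i : ℕ), (j : ℕ)) ω * spin (σ i) * spin (σ j) else 0))

/-- The random partition function. -/
def Zrand {Ω : Type*} (p : ℕ → ℝ) (ξ ζ : ℕ → ℕ × ℕ → Ω → ℝ)
    (β : ℝ) (n : ℕ) (ω : Ω) : ℝ :=
  ∑ σ : Fin n → Bool, Real.exp (-β * Hrand p ξ ζ n σ ω)

/-- Expectation of an observable of the magnetization under the random Gibbs measure. -/
def gibbsExpect {Ω : Type*} (p : ℕ → ℝ) (ξ ζ : ℕ → ℕ × ℕ → Ω → ℝ)
    (β : ℝ) (n : ℕ) (φ : ℝ × ℝ → ℝ) (ω : Ω) : ℝ :=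
  (∑ σ : Fin n → Bool, Real.exp (-β * Hrand p ξ ζ n σ ω) * φ (mag n σ)) /
    Zrand p ξ ζ β n ω

/-- `E_α(m)`. -/
def Ebil (a : ℝ) (m : ℝ × ℝ) : ℝ := (m.1 ^ 2 + m.2 ^ 2) / 4 + (a / 2) * m.1 * m.2

/-- One-dimensional entropy term. -/
def entI (x : ℝ) : ℝ :=
  ((1 + x) / 2) * Real.log ((1 + x) / 2) + ((1 - x) / 2) * Real.log ((1 - x) / 2)

/-- Free energy functional `G_{α,β}`. -/
def Gfun (a β : ℝ) (m : ℝ × ℝ) : ℝ := β * Ebil a m - (entI m.1 + entI m.2)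

/-- Edge index set (internal ⊕ external) of the graph on `n` vertices. -/
def isEdge (n : ℕ) : (ℕ × ℕ) ⊕ (ℕ × ℕ) → Prop :=
  Sum.elim (fun e => innerEdge n e.1 e.2) (fun e => outerEdge n e.1 e.2)

/-- A family of real random variables is Bernoulli with parameter `q`. -/
def IsBernoulli {Ω : Type*} [MeasurableSpace Ω] (P : Measure Ω) (X : Ω → ℝ) (q : ℝ) : Prop :=
  Measurable X ∧ (∀ᵐ ω ∂P, X ω = 0 ∨ X ω = 1) ∧ P {ω | X ω = 1} = ENNReal.ofReal q

/-- The SBM randomness hypotheses: Bernoulli marginals and independence over edges. -/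
def SBMHyp {Ω : Type*} [MeasurableSpace Ω] (P : Measure Ω)
    (p α : ℕ → ℝ) (ξ ζ : ℕ → ℕ × ℕ → Ω → ℝ) : Prop :=
  (∀ n i j, innerEdge n i j → IsBernoulli P (ξ n (i, j)) (p n)) ∧
  (∀ n i j, outerEdge n i j → IsBernoulli P (ζ n (i, j)) (α n * p n)) ∧
  (∀ n, iIndepFun
    (fun e : {e : (ℕ × ℕ) ⊕ (ℕ × ℕ) // isEdge n e} => Sum.elim (ξ n) (ζ n) e.1) P)


/-- Total random interaction over aligned pairs `E⁺(σ)`. -/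
def plusSum {Ω : Type*} (ξ ζ : ℕ → ℕ × ℕ → Ω → ℝ) (n : ℕ) (σ : Fin n → Bool) (ω : Ω) : ℝ :=
  (∑ i : Fin n, ∑ j : Fin n,
      if innerEdge n (i : ℕ) (j : ℕ) ∧ σ i = σ j then ξ n ((i : ℕ), (j : ℕ)) ω else 0) +
  (∑ i : Fin n, ∑ j : Fin n,
      if outerEdge n (i : ℕ) (j : ℕ) ∧ σ i = σ j then ζ n ((i : ℕ), (j : ℕ)) ω else 0)

/-- `|E_I⁺(σ)|`: number of aligned internal edges. -/
def cardInnerPlus (n : ℕ) (σ : Fin n → Bool) : ℕ :=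
  (Finset.univ.filter fun e : Fin n × Fin n =>
    innerEdge n (e.1 : ℕ) (e.2 : ℕ) ∧ σ e.1 = σ e.2).card

/-- `|E_E⁺(σ)|`: number of aligned external edges. -/
def cardOuterPlus (n : ℕ) (σ : Fin n → Bool) : ℕ :=
  (Finset.univ.filter fun e : Fin n × Fin n =>
    outerEdge n (e.1 : ℕ) (e.2 : ℕ) ∧ σ e.1 = σ e.2).card

/-- The good event `Ω̄_n` on which the random interaction concentrates, uniformly over all
configurations. -/
def goodEvent {Ω : Type*} (p αs ρ : ℕ → ℝ) (ξ ζ : ℕ → ℕ × ℕ → Ω → ℝ) (n : ℕ) : Set Ω :=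
  {ω | ∀ σ : Fin n → Bool,
    |plusSum ξ ζ n σ ω -
        p n * ((cardInnerPlus n σ : ℝ) + αs n * (cardOuterPlus n σ : ℝ))| ≤
      ρ n * (p n * ((cardInnerPlus n σ : ℝ) + αs n * (cardOuterPlus n σ : ℝ)))}

/-- The bipartite Curie–Weiss Hamiltonian in edge form:
`H̄_n(σ) = −(1/n) Σ_{E_I} σ_i σ_j − (α_n/n) Σ_{E_E} σ_i σ_j`. -/
def HcwE (a : ℝ) (n : ℕ) (σ : Fin n → Bool) : ℝ :=
  -(1 / (n : ℝ)) * (∑ i : Fin n, ∑ j : Fin n,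
      if innerEdge n (i : ℕ) (j : ℕ) then spin (σ i) * spin (σ j) else 0) -
  (a / (n : ℝ)) * (∑ i : Fin n, ∑ j : Fin n,
      if outerEdge n (i : ℕ) (j : ℕ) then spin (σ i) * spin (σ j) else 0)

lemma spin_mul (a b : Bool) : spin a * spin b = 2 * (if a = b then (1:ℝ) else 0) - 1 := by
  cases a <;> cases b <;> norm_num [spin]

lemma sum_decomp {n : ℕ} (P : ℕ → ℕ → Prop) [∀ i j, Decidable (P i j)]
    (f : Fin n → Fin n → ℝ) (σ : Fin n → Bool) :
    (∑ i : Fin n, ∑ j : Fin n, if P ↑i ↑j then f i j * spin (σ i) * spin (σ j) else 0)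
    = 2 * (∑ i : Fin n, ∑ j : Fin n, if P ↑i ↑j ∧ σ i = σ j then f i j else 0)
      - (∑ i : Fin n, ∑ j : Fin n, if P ↑i ↑j then f i j else 0) := by
  have h : ∀ i j : Fin n, (if P ↑i ↑j then f i j * spin (σ i) * spin (σ j) else 0)
      = 2 * (if P ↑i ↑j ∧ σ i = σ j then f i j else 0) - (if P ↑i ↑j then f i j else 0) := by
    intro i j
    by_cases hp : P ↑i ↑j
    · rw [mul_assoc, spin_mul]
      by_cases hs : σ i = σ j <;> simp [hp, hs] <;> ring
    · simp [hp]
  simp_rw [h, Finset.sum_sub_distrib, Finset.mul_sum]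

lemma sum_ind2 {n : ℕ} (Q : Fin n → Fin n → Prop) [∀ i j, Decidable (Q i j)] :
    (∑ i : Fin n, ∑ j : Fin n, if Q i j then (1:ℝ) else 0)
    = ((Finset.univ.filter fun e : Fin n × Fin n => Q e.1 e.2).card : ℝ) := by
  rw [← Finset.sum_product', Finset.univ_product_univ, Finset.sum_boole]

lemma card_lt_pairs_le (n : ℕ) :
    2 * ((Finset.univ.filter fun e : Fin n × Fin n => (e.1 : ℕ) < (e.2 : ℕ)).card) ≤ n * n := by
  classical
  set L := Finset.univ.filter fun e : Fin n × Fin n => (e.1 : ℕ) < (e.2 : ℕ) with hL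
  set G := Finset.univ.filter fun e : Fin n × Fin n => (e.2 : ℕ) < (e.1 : ℕ) with hG
  have himg : L.image Prod.swap = G := by
    ext e
    simp only [hL, hG, Finset.mem_image, Finset.mem_filter, Finset.mem_univ, true_and]
    constructor
    · rintro ⟨a, ha, rfl⟩; exact ha
    · intro he; exact ⟨e.swap, by simpa using he, by simp⟩
  have hcard : L.card = G.card := by
    rw [← himg, Finset.card_image_of_injective _ Prod.swap_injective]
  have hdisj : Disjoint L G := by
    rw [Finset.disjoint_left]
    intro e heL heG
    simp only [hL, hG, Finset.mem_filter] at heL heG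
    omega
  have hunion : L.card + G.card = (L ∪ G).card := (Finset.card_union_of_disjoint hdisj).symm
  have hle : (L ∪ G).card ≤ Fintype.card (Fin n × Fin n) := Finset.card_le_univ _
  simp only [Fintype.card_prod, Fintype.card_fin] at hle
  omega

set_option maxHeartbeats 1600000 in
/-- on the good event `Ω̄_n`, the random Hamiltonian and the bipartite
Curie–Weiss Hamiltonian differ by at most `(3/2) n ρ_n`, uniformly in the configuration. -/
theorem hamiltonian_comparison_on_goodEvent
    {Ω : Type*} [MeasurableSpace Ω] (P : Measure Ω) [IsProbabilityMeasure P]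
    (p α ρ : ℕ → ℝ)
    (hp : ∀ n, p n ∈ Set.Ioc (0 : ℝ) 1) (hα : ∀ n, α n ∈ Set.Icc (0 : ℝ) 1)
    (hnp : Tendsto (fun n : ℕ => (n : ℝ) * p n) atTop atTop)
    (ξ ζ : ℕ → ℕ × ℕ → Ω → ℝ) (hSBM : SBMHyp P p α ξ ζ)
    (hρpos : ∀ n, 0 < ρ n) (hρ0 : Tendsto ρ atTop (nhds 0))
    (hρlb : ∀ n, 3 / Real.sqrt (p n * n) ≤ ρ n) :
    ∀ n : ℕ, Even n → ∀ ω ∈ goodEvent p α ρ ξ ζ n, ∀ σ : Fin n → Bool,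
      |Hrand p ξ ζ n σ ω - HcwE (α n) n σ| ≤ (3 / 2) * n * ρ n := by
  intro n hn ω hω σ
  rcases Nat.eq_zero_or_pos n with h0 | hnpos
  · subst h0; simp [Hrand, HcwE]
  have hpn : 0 < p n := (hp n).1
  have hαn0 : 0 ≤ α n := (hα n).1
  have hαn1 : α n ≤ 1 := (hα n).2
  have hρn : 0 < ρ n := hρpos n
  have hnR : (0:ℝ) < n := by exact_mod_cast hnpos
  have hn0 : (n:ℝ) ≠ 0 := ne_of_gt hnR
  have hp0 : p n ≠ 0 := ne_of_gt hpn
  have hnp : (0:ℝ) < (n:ℝ) * p n := by positivity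
  -- nat-level cardinalities
  set NIn := (Finset.univ.filter fun e : Fin n × Fin n => innerEdge n ↑e.1 ↑e.2).card with hNIn
  set NEn := (Finset.univ.filter fun e : Fin n × Fin n => outerEdge n ↑e.1 ↑e.2).card with hNEn
  -- cardinalities of constant configurations
  have e1 : cardInnerPlus n (fun _ => true : Fin n → Bool) = NIn := by
    rw [hNIn]; unfold cardInnerPlus; congr 1; ext e; simp
  have e2 : cardOuterPlus n (fun _ => true : Fin n → Bool) = NEn := by
    rw [hNEn]; unfold cardOuterPlus; congr 1; ext e; simp
  clear_value NIn NEn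
  -- the two concentration bounds
  have hX := hω σ
  have hY := hω (fun _ => true)
  rw [e1, e2] at hY
  unfold plusSum at hX hY
  simp only [eq_self_iff_true, and_true] at hY
  -- expand the random Hamiltonian
  have eqH : Hrand p ξ ζ n σ ω = -(1 / ((n:ℝ) * p n)) *
      ((2 * (∑ i : Fin n, ∑ j : Fin n,
          if innerEdge n ↑i ↑j ∧ σ i = σ j then ξ n (↑i, ↑j) ω else 0)
        - (∑ i : Fin n, ∑ j : Fin n, if innerEdge n ↑i ↑j then ξ n (↑i, ↑j) ω else 0))
       + (2 * (∑ i : Fin n, ∑ j : Fin n,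
          if outerEdge n ↑i ↑j ∧ σ i = σ j then ζ n (↑i, ↑j) ω else 0)
        - (∑ i : Fin n, ∑ j : Fin n, if outerEdge n ↑i ↑j then ζ n (↑i, ↑j) ω else 0))) := by
    unfold Hrand
    rw [sum_decomp (innerEdge n) (fun i j => ξ n (↑i, ↑j) ω) σ,
        sum_decomp (outerEdge n) (fun i j => ζ n (↑i, ↑j) ω) σ]
  -- expand the Curie–Weiss Hamiltonian
  have eqC : HcwE (α n) n σ = -(1 / (n:ℝ)) * (2 * (cardInnerPlus n σ : ℝ) - (NIn : ℝ))
      - (α n / (n:ℝ)) * (2 * (cardOuterPlus n σ : ℝ) - (NEn : ℝ)) := by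
    unfold HcwE
    have d1 := sum_decomp (n := n) (innerEdge n) (fun _ _ => (1:ℝ)) σ
    have d2 := sum_decomp (n := n) (outerEdge n) (fun _ _ => (1:ℝ)) σ
    simp only [one_mul] at d1 d2
    rw [d1, d2,
        sum_ind2 (fun i j : Fin n => innerEdge n ↑i ↑j ∧ σ i = σ j),
        sum_ind2 (fun i j : Fin n => outerEdge n ↑i ↑j ∧ σ i = σ j),
        sum_ind2 (fun i j : Fin n => innerEdge n ↑i ↑j),
        sum_ind2 (fun i j : Fin n => outerEdge n ↑i ↑j)]
    rw [hNIn, hNEn]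
    unfold cardInnerPlus cardOuterPlus
    norm_num
  -- abbreviations
  set AI := (∑ i : Fin n, ∑ j : Fin n,
      if innerEdge n ↑i ↑j ∧ σ i = σ j then ξ n (↑i, ↑j) ω else 0) with hAI
  set AE := (∑ i : Fin n, ∑ j : Fin n,
      if outerEdge n ↑i ↑j ∧ σ i = σ j then ζ n (↑i, ↑j) ω else 0) with hAE
  set TI := (∑ i : Fin n, ∑ j : Fin n,
      if innerEdge n ↑i ↑j then ξ n (↑i, ↑j) ω else 0) with hTI
  set TE := (∑ i : Fin n, ∑ j : Fin n,
      if outerEdge n ↑i ↑j then ζ n (↑i, ↑j) ω else 0) with hTE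
  set NIp := (cardInnerPlus n σ : ℝ) with hNIp
  set NEp := (cardOuterPlus n σ : ℝ) with hNEp
  clear_value AI AE TI TE NIp NEp
  -- difference formula
  have hΔ : Hrand p ξ ζ n σ ω - HcwE (α n) n σ = -(1 / ((n:ℝ) * p n)) *
      (2 * ((AI + AE) - p n * (NIp + α n * NEp))
        - ((TI + TE) - p n * ((NIn : ℝ) + α n * (NEn : ℝ)))) := by
    rw [eqH, eqC]; field_simp; ring
  rw [hΔ, abs_mul]
  have habs1 : |(-(1 / ((n:ℝ) * p n)))| = 1 / ((n:ℝ) * p n) := by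
    rw [abs_neg, abs_of_pos]; positivity
  rw [habs1]
  -- cardinality bounds
  have hb1 : NIp ≤ (NIn : ℝ) := by
    rw [hNIp, hNIn]; norm_cast
    apply Finset.card_le_card
    intro e he
    simp only [Finset.mem_filter, Finset.mem_univ, true_and] at he ⊢; exact he.1
  have hb2 : NEp ≤ (NEn : ℝ) := by
    rw [hNEp, hNEn]; norm_cast
    apply Finset.card_le_card
    intro e he
    simp only [Finset.mem_filter, Finset.mem_univ, true_and] at he ⊢; exact he.1
  have hNIp0 : 0 ≤ NIp := by rw [hNIp]; positivity
  have hNEp0 : 0 ≤ NEp := by rw [hNEp]; positivity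
  have hNE0 : (0:ℝ) ≤ (NEn : ℝ) := Nat.cast_nonneg _
  have hNI0 : (0:ℝ) ≤ (NIn : ℝ) := Nat.cast_nonneg _
  -- NIn + NEn ≤ n²/2
  have hNN : (NIn : ℝ) + (NEn : ℝ) ≤ (n:ℝ) * (n:ℝ) / 2 := by
    have hsubI : (Finset.univ.filter fun e : Fin n × Fin n => innerEdge n ↑e.1 ↑e.2) ∪
        (Finset.univ.filter fun e : Fin n × Fin n => outerEdge n ↑e.1 ↑e.2) ⊆
        (Finset.univ.filter fun e : Fin n × Fin n => (e.1 : ℕ) < (e.2 : ℕ)) := by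
      intro e he
      simp only [Finset.mem_union, Finset.mem_filter, Finset.mem_univ, true_and] at he ⊢
      rcases he with h | h
      · exact h.1
      · exact lt_of_lt_of_le h.1 h.2.1
    have hdisj : Disjoint (Finset.univ.filter fun e : Fin n × Fin n => innerEdge n ↑e.1 ↑e.2)
        (Finset.univ.filter fun e : Fin n × Fin n => outerEdge n ↑e.1 ↑e.2) := by
      rw [Finset.disjoint_left]
      intro e heI heO
      simp only [Finset.mem_filter, Finset.mem_univ, true_and] at heI heO
      obtain ⟨-, -, h⟩ := heI
      obtain ⟨h1, h2, -⟩ := heO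
      omega
    have hsum : NIn + NEn ≤
        (Finset.univ.filter fun e : Fin n × Fin n => (e.1 : ℕ) < (e.2 : ℕ)).card := by
      rw [hNIn, hNEn, ← Finset.card_union_of_disjoint hdisj]
      exact Finset.card_le_card hsubI
    have h2 := card_lt_pairs_le n
    have : 2 * (NIn + NEn) ≤ n * n := by omega
    have := (Nat.cast_le (α := ℝ)).2 this
    push_cast at this
    linarith
  -- put the pieces together
  have hM : NIp + α n * NEp ≤ (NIn : ℝ) + α n * (NEn : ℝ) := by
    have := mul_le_mul_of_nonneg_left hb2 hαn0
    linarith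
  have hMpos : 0 ≤ (NIn : ℝ) + α n * (NEn : ℝ) := by positivity
  have hMtop : (NIn : ℝ) + α n * (NEn : ℝ) ≤ (NIn : ℝ) + (NEn : ℝ) := by
    nlinarith [hNE0, hαn1]
  have habs2 : |2 * ((AI + AE) - p n * (NIp + α n * NEp))
      - ((TI + TE) - p n * ((NIn : ℝ) + α n * (NEn : ℝ)))| ≤
      3 * (ρ n * (p n * ((NIn : ℝ) + α n * (NEn : ℝ)))) := by
    have t1 : |2 * ((AI + AE) - p n * (NIp + α n * NEp))
        - ((TI + TE) - p n * ((NIn : ℝ) + α n * (NEn : ℝ)))| ≤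
        2 * |(AI + AE) - p n * (NIp + α n * NEp)|
          + |(TI + TE) - p n * ((NIn : ℝ) + α n * (NEn : ℝ))| := by
      calc _ ≤ |2 * ((AI + AE) - p n * (NIp + α n * NEp))|
            + |(TI + TE) - p n * ((NIn : ℝ) + α n * (NEn : ℝ))| := abs_sub _ _
        _ = _ := by rw [abs_mul]; norm_num
    have t2 : ρ n * (p n * (NIp + α n * NEp)) ≤
        ρ n * (p n * ((NIn : ℝ) + α n * (NEn : ℝ))) := by
      apply mul_le_mul_of_nonneg_left _ hρn.le
      exact mul_le_mul_of_nonneg_left hM hpn.le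
    linarith [t1, t2, hX, hY]
  calc (1 / ((n:ℝ) * p n)) * |2 * ((AI + AE) - p n * (NIp + α n * NEp))
      - ((TI + TE) - p n * ((NIn : ℝ) + α n * (NEn : ℝ)))|
      ≤ (1 / ((n:ℝ) * p n)) * (3 * (ρ n * (p n * ((NIn : ℝ) + α n * (NEn : ℝ))))) := by
        apply mul_le_mul_of_nonneg_left habs2
        positivity
    _ ≤ (3 / 2) * n * ρ n := by
        rw [one_div_mul_eq_div, div_le_iff₀ hnp]
        nlinarith [mul_le_mul_of_nonneg_left (hMtop.trans hNN) (mul_nonneg hρn.le hpn.le)]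

end
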